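/- V(G) ≥ λ^{-2} · (e^{2ρ} + e^ρ ρ² γ_s² − 2ρe^ρ − 1). (This is the lower bound in formula (1.3); since e^{2ρ} − 2ρe^ρ − 1 ≥ 0, this bound is automatically nonnegative.) -/

import Mathlib

open MeasureTheory Real Set Filter

/-- Lower bound of formula (1.3): the M/G/∞ busy period variance satisfies
`V(G) ≥ λ⁻² (e^{2ρ} + e^ρ ρ² γ_s² - 2ρ e^ρ - 1)`. -/
theorem mg_infty_busy_period_variance_lower_bound
    (G : ℝ → ℝ)
    (hmono : Monotone G)
    (hrc : ∀ v : ℝ, ContinuousWithinAt G (Set.Ici v) v)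
    (hneg : ∀ v : ℝ, v < 0 → G v = 0)
    (hlim : Tendsto G atTop (nhds 1))
    (lam α μ₂ ρ σ2 γ2 : ℝ)
    (hlam : 0 < lam)
    (hInt1 : IntegrableOn (fun v => 1 - G v) (Ioi 0))
    (hα : α = ∫ v in Ioi (0:ℝ), (1 - G v))
    (hαpos : 0 < α)
    (hInt2 : IntegrableOn (fun v => v * (1 - G v)) (Ioi 0))
    (hμ₂ : μ₂ = 2 * ∫ v in Ioi (0:ℝ), v * (1 - G v))
    (hρ : ρ = lam * α)
    (hσ : σ2 = μ₂ - α ^ 2)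
    (hγ : γ2 = σ2 / α ^ 2) :
    lam⁻¹ ^ 2 * (exp (2 * ρ) + exp ρ * ρ ^ 2 * γ2 - 2 * ρ * exp ρ - 1)
      ≤ (2 * exp ρ / lam) * (∫ t in Ioi (0:ℝ), (exp (lam * ∫ v in Ioi t, (1 - G v)) - 1))
        - ((exp ρ - 1) / lam) ^ 2 := by
  -- basic facts about f = 1 - G
  set f : ℝ → ℝ := fun v => 1 - G v with hfdef
  have hG0 : ∀ v : ℝ, 0 ≤ G v := by
    intro v
    rcases lt_or_ge v 0 with hv | hv
    · exact (hneg v hv).ge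
    · calc (0:ℝ) = G (-1) := (hneg (-1) (by norm_num)).symm
        _ ≤ G v := hmono (by linarith)
  have hG1 : ∀ v : ℝ, G v ≤ 1 := fun v => hmono.ge_of_tendsto hlim v
  have hf0 : ∀ v : ℝ, 0 ≤ f v := fun v => by simp [hfdef]; linarith [hG1 v]
  have hf1 : ∀ v : ℝ, f v ≤ 1 := fun v => by simp [hfdef]; linarith [hG0 v]
  have hGm : Measurable G := hmono.measurable
  have hfm : Measurable f := (measurable_const.sub hGm)
  have hfint : ∀ s : ℝ, IntegrableOn f (Ioi s) := by
    intro s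
    rcases le_or_gt 0 s with hs | hs
    · exact hInt1.mono_set (Ioi_subset_Ioi hs)
    · have : Ioi s = Ioc s 0 ∪ Ioi 0 := (Ioc_union_Ioi_eq_Ioi hs.le).symm
      rw [this]
      refine IntegrableOn.union ?_ hInt1
      refine Integrable.mono' (integrable_const (1:ℝ)) (hfm.aestronglyMeasurable.restrict) ?_
      filter_upwards with v
      rw [Real.norm_eq_abs, abs_le]
      constructor <;> [linarith [hf0 v]; linarith [hf1 v]]
  set h : ℝ → ℝ := fun t => ∫ v in Ioi t, f v with hhdef
  have hanti : Antitone h := by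
    intro s t hst
    exact setIntegral_mono_set (hfint s) (.of_forall hf0) (HasSubset.Subset.eventuallyLE (Ioi_subset_Ioi hst))
  have hhm : Measurable h := hanti.measurable
  have hh0 : ∀ t : ℝ, 0 ≤ h t := fun t => setIntegral_nonneg measurableSet_Ioi fun v _ => hf0 v
  have hh_alpha : ∀ t : ℝ, 0 ≤ t → h t ≤ α := by
    intro t ht
    rw [hα]
    exact hanti ht
  have hh_lb : ∀ t : ℝ, 0 < t → α - t ≤ h t := by
    intro t ht
    have hsplit : ∫ v in Ioi (0:ℝ), f v = (∫ v in Ioc 0 t, f v) + ∫ v in Ioi t, f v := by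
      rw [← setIntegral_union (Set.Ioc_disjoint_Ioi le_rfl) measurableSet_Ioi
        (hInt1.mono_set Ioc_subset_Ioi_self) (hfint t), Ioc_union_Ioi_eq_Ioi ht.le]
    have hIoc : ∫ v in Ioc 0 t, f v ≤ t := by
      calc ∫ v in Ioc 0 t, f v ≤ ∫ _ in Ioc 0 t, (1:ℝ) := by
            refine setIntegral_mono_on (hInt1.mono_set Ioc_subset_Ioi_self)
              (integrableOn_const (by simp)) measurableSet_Ioc fun v _ => hf1 v
        _ = t := by simp [Real.volume_Ioc, ht.le]
    have := hα
    rw [hhdef]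
    simp only []
    rw [hα] at *
    linarith [hsplit, hIoc]
  -- Tonelli: ∫ h over Ioi 0 equals μ₂ / 2, and h is integrable
  have key : ∫⁻ t in Ioi (0:ℝ), ∫⁻ v in Ioi t, ENNReal.ofReal (f v)
      = ∫⁻ v in Ioi (0:ℝ), ENNReal.ofReal (v * f v) := by
    have hFm : Measurable fun v => ENNReal.ofReal (f v) := hfm.ennreal_ofReal
    calc ∫⁻ t in Ioi (0:ℝ), ∫⁻ v in Ioi t, ENNReal.ofReal (f v)
        = ∫⁻ t in Ioi (0:ℝ), ∫⁻ v in Ioi (0:ℝ),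
            (Ioi t).indicator (fun v => ENNReal.ofReal (f v)) v := by
          refine setLIntegral_congr_fun measurableSet_Ioi (fun t ht => ?_)
          rw [lintegral_indicator measurableSet_Ioi, Measure.restrict_restrict measurableSet_Ioi,
            Ioi_inter_Ioi, max_eq_left (le_of_lt ht)]
      _ = ∫⁻ v in Ioi (0:ℝ), ∫⁻ t in Ioi (0:ℝ),
            (Ioi t).indicator (fun v => ENNReal.ofReal (f v)) v := by
          apply lintegral_lintegral_swap
          apply Measurable.aemeasurable
          have huncurry : (Function.uncurry fun t v =>
              (Ioi t).indicator (fun v => ENNReal.ofReal (f v)) v)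
              = fun p : ℝ × ℝ => if p.1 < p.2 then ENNReal.ofReal (f p.2) else 0 := by
            ext p
            simp [Function.uncurry, Set.indicator_apply]
          rw [huncurry]
          exact Measurable.ite (measurableSet_lt measurable_fst measurable_snd)
            (hFm.comp measurable_snd) measurable_const
      _ = ∫⁻ v in Ioi (0:ℝ), ENNReal.ofReal (v * f v) := by
          refine setLIntegral_congr_fun measurableSet_Ioi (fun v hv => ?_)
          have hswap : ∀ t : ℝ, (Ioi t).indicator (fun w => ENNReal.ofReal (f w)) v
              = (Iio v).indicator (fun _ => ENNReal.ofReal (f v)) t := by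
            intro t
            simp [Set.indicator_apply]
          rw [lintegral_congr hswap]
          rw [lintegral_indicator measurableSet_Iio, Measure.restrict_restrict measurableSet_Iio,
            setLIntegral_const, Iio_inter_Ioi, Real.volume_Ioo,
            ENNReal.ofReal_mul (le_of_lt hv)]
          rw [sub_zero, mul_comm]
  have h_repr : ∀ t : ℝ, ENNReal.ofReal (h t) = ∫⁻ v in Ioi t, ENNReal.ofReal (f v) := by
    intro t
    have e1 : h t = (∫⁻ v in Ioi t, ENNReal.ofReal (f v)).toReal :=
      integral_eq_lintegral_of_nonneg_ae (ae_of_all _ hf0) hfm.aestronglyMeasurable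
    rw [e1, ENNReal.ofReal_toReal (hfint t).lintegral_lt_top.ne]
  have lfin : ∫⁻ t in Ioi (0:ℝ), ENNReal.ofReal (h t)
      = ∫⁻ v in Ioi (0:ℝ), ENNReal.ofReal (v * f v) := by
    rw [← key]
    exact lintegral_congr fun t => h_repr t
  have h_int : IntegrableOn h (Ioi 0) := by
    refine ⟨hhm.aestronglyMeasurable, ?_⟩
    rw [hasFiniteIntegral_iff_ofReal (ae_of_all _ hh0), lfin]
    exact hInt2.lintegral_lt_top
  have e2 : ∫ v in Ioi (0:ℝ), v * f v = (∫⁻ v in Ioi (0:ℝ), ENNReal.ofReal (v * f v)).toReal := by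
    refine integral_eq_lintegral_of_nonneg_ae ?_ (measurable_id.mul hfm).aestronglyMeasurable
    exact (ae_restrict_iff' measurableSet_Ioi).2 (ae_of_all _ fun v hv =>
      mul_nonneg (le_of_lt hv) (hf0 v))
  have h_intval : ∫ t in Ioi (0:ℝ), h t = μ₂ / 2 := by
    have e1 : ∫ t in Ioi (0:ℝ), h t = (∫⁻ t in Ioi (0:ℝ), ENNReal.ofReal (h t)).toReal :=
      integral_eq_lintegral_of_nonneg_ae (ae_of_all _ hh0) hhm.aestronglyMeasurable
    have e3 : μ₂ = 2 * ∫ v in Ioi (0:ℝ), v * f v := hμ₂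
    rw [e1, lfin, ← e2, e3]
    ring
  -- pointwise exponential inequalities
  have g_mono : ∀ x y : ℝ, 0 ≤ x → x ≤ y → exp x - 1 - x ≤ exp y - 1 - y := by
    intro x y hx hxy
    have h1 : (y - x) + 1 ≤ exp (y - x) := Real.add_one_le_exp _
    have h2 : (1:ℝ) ≤ exp x := Real.one_le_exp hx
    have h3 : exp x * ((y - x) + 1) ≤ exp x * exp (y - x) :=
      mul_le_mul_of_nonneg_left h1 (exp_pos x).le
    rw [← Real.exp_add] at h3
    have hxy' : x + (y - x) = y := by ring
    rw [hxy'] at h3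
    nlinarith
  have hexp_ub : ∀ x : ℝ, 0 ≤ x → x ≤ ρ → exp x - 1 ≤ x * exp ρ := by
    intro x hx hxρ
    have h1 : (-x) + 1 ≤ exp (-x) := Real.add_one_le_exp _
    have h2 : exp x * ((-x) + 1) ≤ exp x * exp (-x) :=
      mul_le_mul_of_nonneg_left h1 (exp_pos x).le
    rw [← Real.exp_add] at h2
    simp only [add_neg_cancel, Real.exp_zero] at h2
    have h3 : exp x ≤ exp ρ := Real.exp_le_exp.2 hxρ
    nlinarith [exp_pos x]
  have hρpos : 0 < ρ := by rw [hρ]; positivity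
  -- integrability of the exponential integrand
  have hmeas_e : AEStronglyMeasurable (fun t => exp (lam * h t) - 1) (volume.restrict (Ioi 0)) := by
    exact ((Real.continuous_exp.measurable.comp (hhm.const_mul lam)).sub measurable_const).aestronglyMeasurable
  have hbound : ∀ t ∈ Ioi (0:ℝ), exp (lam * h t) - 1 ≤ lam * exp ρ * h t := by
    intro t ht
    have := hexp_ub (lam * h t) (mul_nonneg hlam.le (hh0 t))
      (by rw [hρ]; exact mul_le_mul_of_nonneg_left (hh_alpha t (le_of_lt ht)) hlam.le)
    linarith [this]
  have hnn : ∀ t : ℝ, 0 ≤ exp (lam * h t) - 1 := by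
    intro t
    have : (1:ℝ) ≤ exp (lam * h t) := Real.one_le_exp (mul_nonneg hlam.le (hh0 t))
    linarith
  have hexp_int : IntegrableOn (fun t => exp (lam * h t) - 1) (Ioi 0) := by
    refine Integrable.mono' (h_int.const_mul (lam * exp ρ)) hmeas_e ?_
    rw [ae_restrict_iff' measurableSet_Ioi]
    filter_upwards with t ht
    rw [Real.norm_eq_abs, abs_of_nonneg (hnn t)]
    have := hbound t ht; linarith
  -- the comparison function q
  set q : ℝ → ℝ := fun t => exp (lam * max (α - t) 0) - 1 - lam * max (α - t) 0 with hqdef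
  have hqcont : Continuous q := by
    have : Continuous fun t : ℝ => lam * max (α - t) 0 :=
      continuous_const.mul ((continuous_const.sub continuous_id).max continuous_const)
    exact ((Real.continuous_exp.comp this).sub continuous_const).sub this
  have hqzero : ∀ t : ℝ, α ≤ t → q t = 0 := by
    intro t ht
    have : max (α - t) 0 = 0 := max_eq_right (by linarith)
    simp [hqdef, this]
  have hq_int : IntegrableOn q (Ioi 0) := by
    rw [← Ioc_union_Ioi_eq_Ioi hαpos.le]
    refine IntegrableOn.union (hqcont.integrableOn_Ioc) ?_
    exact (integrableOn_congr_fun (fun t ht => hqzero t (le_of_lt ht)) measurableSet_Ioi).2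
      (integrableOn_zero)
  have hg_int : IntegrableOn (fun t => exp (lam * h t) - 1 - lam * h t) (Ioi 0) :=
    hexp_int.sub (h_int.const_mul lam)
  -- pointwise comparison q ≤ g ∘ (lam * h)
  have hq_le : ∫ t in Ioi (0:ℝ), q t ≤ ∫ t in Ioi (0:ℝ), (exp (lam * h t) - 1 - lam * h t) := by
    refine setIntegral_mono_on hq_int hg_int measurableSet_Ioi fun t ht => ?_
    have hmax : max (α - t) 0 ≤ h t := max_le (hh_lb t ht) (hh0 t)
    exact g_mono _ _ (mul_nonneg hlam.le (le_max_right _ _))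
      (mul_le_mul_of_nonneg_left hmax hlam.le)
  -- compute ∫ q via FTC
  have hq_val : ∫ t in Ioi (0:ℝ), q t = (exp ρ - 1) / lam - α - lam * α ^ 2 / 2 := by
    have hsplit : ∫ t in Ioi (0:ℝ), q t = (∫ t in Ioc 0 α, q t) + ∫ t in Ioi α, q t := by
      rw [← setIntegral_union (Set.Ioc_disjoint_Ioi le_rfl) measurableSet_Ioi
        (hq_int.mono_set Ioc_subset_Ioi_self)
        ((integrableOn_congr_fun (fun t ht => hqzero t (le_of_lt ht)) measurableSet_Ioi).2
          integrableOn_zero), Ioc_union_Ioi_eq_Ioi hαpos.le]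
    have htail : ∫ t in Ioi α, q t = 0 := by
      rw [setIntegral_congr_fun measurableSet_Ioi (fun t ht => hqzero t (le_of_lt ht))]
      simp
    set p : ℝ → ℝ := fun t => exp (lam * (α - t)) - 1 - lam * (α - t) with hpdef
    have hqp : ∀ t ∈ Ioc (0:ℝ) α, q t = p t := by
      intro t ht
      have : max (α - t) 0 = α - t := max_eq_left (by linarith [ht.2])
      simp [hqdef, hpdef, this]
    have hpcont : Continuous p := by
      have : Continuous fun t : ℝ => lam * (α - t) :=
        continuous_const.mul (continuous_const.sub continuous_id)
      exact ((Real.continuous_exp.comp this).sub continuous_const).sub this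
    have hftc : ∫ t in (0:ℝ)..α, p t
        = (fun t => -(1/lam) * exp (lam * (α - t)) - t + lam/2 * (α - t)^2) α
          - (fun t => -(1/lam) * exp (lam * (α - t)) - t + lam/2 * (α - t)^2) 0 := by
      refine intervalIntegral.integral_eq_sub_of_hasDerivAt
        (f := fun t => -(1/lam) * exp (lam * (α - t)) - t + lam/2 * (α - t)^2) (fun x _ => ?_)
        (hpcont.intervalIntegrable 0 α)
      have d1 : HasDerivAt (fun t : ℝ => lam * (α - t)) (-lam) x := by
        simpa using ((hasDerivAt_id x).const_sub α).const_mul lam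
      have d2 : HasDerivAt (fun t : ℝ => exp (lam * (α - t))) (exp (lam * (α - x)) * (-lam)) x :=
        (Real.hasDerivAt_exp _).comp x d1
      have d3 : HasDerivAt (fun t : ℝ => (α - t)^2) (2 * (α - x) * (-1)) x := by
        have : HasDerivAt (fun t : ℝ => α - t) (-1) x := by
          simpa using (hasDerivAt_id x).const_sub α
        simpa using (this.fun_pow 2)
      have := ((d2.const_mul (-(1/lam))).sub (hasDerivAt_id x)).add (d3.const_mul (lam/2))
      convert this using 1
      · rfl
      show exp (lam * (α - x)) - 1 - lam * (α - x) = _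
      field_simp
      ring
    have hioc : ∫ t in Ioc (0:ℝ) α, q t = ∫ t in (0:ℝ)..α, p t := by
      rw [intervalIntegral.integral_of_le hαpos.le, setIntegral_congr_fun measurableSet_Ioc hqp]
    rw [hsplit, htail, hioc, hftc]
    simp only [sub_self, mul_zero, Real.exp_zero, sub_zero]
    rw [hρ]
    field_simp
    ring
  -- assemble: lower bound for the exponential integral
  have hdecomp : ∫ t in Ioi (0:ℝ), (exp (lam * h t) - 1)
      = lam * (μ₂ / 2) + ∫ t in Ioi (0:ℝ), (exp (lam * h t) - 1 - lam * h t) := by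
    have : (fun t => exp (lam * h t) - 1)
        = fun t => lam * h t + (exp (lam * h t) - 1 - lam * h t) := by
      funext t; ring
    rw [this, integral_add (h_int.const_mul lam) hg_int, MeasureTheory.integral_const_mul, h_intval]
  have hC_lb : lam * (μ₂ / 2) + ((exp ρ - 1) / lam - α - lam * α ^ 2 / 2)
      ≤ ∫ t in Ioi (0:ℝ), (exp (lam * h t) - 1) := by
    rw [hdecomp, ← hq_val]
    linarith [hq_le]
  -- final algebra
  have hgoal_eq : (∫ t in Ioi (0:ℝ), (exp (lam * ∫ v in Ioi t, (1 - G v)) - 1))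
      = ∫ t in Ioi (0:ℝ), (exp (lam * h t) - 1) := rfl
  rw [hgoal_eq]
  have hα0 : α ≠ 0 := ne_of_gt hαpos
  have hl0 : lam ≠ 0 := ne_of_gt hlam
  have hALG : lam⁻¹ ^ 2 * (exp (2 * ρ) + exp ρ * ρ ^ 2 * γ2 - 2 * ρ * exp ρ - 1)
      = 2 * exp ρ / lam * (lam * (μ₂ / 2) + ((exp ρ - 1) / lam - α - lam * α ^ 2 / 2))
        - ((exp ρ - 1) / lam) ^ 2 := by
    rw [hγ, hσ, hρ, two_mul, Real.exp_add]
    field_simp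
    ring
  rw [hALG]
  have hpos : (0:ℝ) ≤ 2 * exp ρ / lam := by positivity
  have := mul_le_mul_of_nonneg_left hC_lb hpos
  linarith
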